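/- Let r ≥ 3 and let G be a 2r-regular graph of order n with n ≡ 0 (mod r), in which there exist r completely independent spanning trees T_1, …, T_r. Then for every integer i with 1 ≤ i ≤ r one has |inn(T_i)| = n/r and ped(T_i) = 2. -/
import Mathlib


open SimpleGraph

/-- The degree of the vertex `v` in the graph `T`, as the cardinality of its
neighbor set. -/
noncomputable def degN {V : Type*} (T : SimpleGraph V) (v : V) : ℕ :=
  (T.neighborSet v).ncard

/-- `T` is a spanning tree of `G`: a subgraph of `G` (on the same vertex set)
which is a tree. -/
def IsSpanningTreeOf {V : Type*} (G T : SimpleGraph V) : Prop :=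
  T ≤ G ∧ T.IsTree

/-- The set of inner (non-leaf) vertices of `T`. -/
def inn {V : Type*} (T : SimpleGraph V) : Set V :=
  {v | 2 ≤ degN T v}

/-- `T 0, …, T (r-1)` are completely independent spanning trees of `G`:
pairwise edge-disjoint spanning trees of `G` such that every vertex has degree
greater than `1` in at most one of them. -/
def AreCISTs {V : Type*} {r : ℕ} (G : SimpleGraph V) (T : Fin r → SimpleGraph V) : Prop :=
  (∀ i, IsSpanningTreeOf G (T i)) ∧
  (∀ i j, i ≠ j → Disjoint ((T i).edgeSet) ((T j).edgeSet)) ∧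
  (∀ v : V, ∀ i j, 1 < degN (T i) v → 1 < degN (T j) v → i = j)

/-- `G` is `d`-regular: every vertex has degree `d`. -/
def IsRegularDeg {V : Type*} (G : SimpleGraph V) (d : ℕ) : Prop :=
  ∀ v, degN G v = d

/-- The set of lost edges: edges of `G` belonging to none of the trees `T i`. -/
def lostEdges {V : Type*} {r : ℕ} (G : SimpleGraph V) (T : Fin r → SimpleGraph V) :
    Set (Sym2 V) :=
  G.edgeSet \ ⋃ i, (T i).edgeSet

/-- `E^l_T`: the set of edges of `G` having both endpoints inner vertices of `T`
and which are not edges of `T`. -/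
def lostAt {V : Type*} (G T : SimpleGraph V) : Set (Sym2 V) :=
  {e | e ∈ G.edgeSet ∧ (∀ v ∈ e, v ∈ inn T) ∧ e ∉ T.edgeSet}

/-- The potential extra degree of a spanning tree `T` of a `2r`-regular graph of
order `n`: `ped(T) = |inn(T)|·r − n + 2` (as an integer). -/
noncomputable def ped {V : Type*} (n r : ℕ) (T : SimpleGraph V) : ℤ :=
  ((inn T).ncard : ℤ) * r - n + 2


open Finset in
private lemma degN_eq_degree {V : Type*} [Fintype V] (T : SimpleGraph V) [DecidableRel T.Adj] (v : V) :
    degN T v = T.degree v := by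
  rw [degN, SimpleGraph.degree, SimpleGraph.neighborFinset]
  exact Set.ncard_eq_toFinset_card' _

private lemma one_le_degree_conn {V : Type*} [Fintype V] {G : SimpleGraph V} [DecidableRel G.Adj]
    (hc : G.Connected) (h2 : 2 ≤ Fintype.card V) (v : V) : 1 ≤ G.degree v := by
  rw [Nat.one_le_iff_ne_zero, ← Nat.pos_iff_ne_zero, SimpleGraph.degree_pos_iff_exists_adj]
  obtain ⟨u, hu⟩ := Fintype.exists_ne_of_one_lt_card (by omega) v
  obtain ⟨p⟩ := hc.preconnected v u
  cases p with
  | nil => exact absurd rfl hu.symm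
  | cons h q => exact ⟨_, h⟩

/-- If `G` is a `2r`-regular graph of order `n` with `r ≥ 3` and `n ≡ 0 (mod r)`,
admitting `r` completely independent spanning trees `T_1, …, T_r`, then for every
`i`, `|inn(T_i)| = n/r` and `ped(T_i) = 2`. -/
theorem stmt_6 {V : Type*} [Fintype V] (r : ℕ) (hr : 3 ≤ r)
    (G : SimpleGraph V) (hreg : IsRegularDeg G (2 * r))
    (hdvd : r ∣ Fintype.card V)
    (T : Fin r → SimpleGraph V) (hT : AreCISTs G T) :
    ∀ i : Fin r,
      (inn (T i)).ncard = Fintype.card V / r ∧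
      ped (Fintype.card V) r (T i) = 2 := by
  classical
  obtain ⟨hsp, hdisj, hinner⟩ := hT
  set n := Fintype.card V with hn
  have hrpos : 0 < r := by omega
  have hne : Nonempty V := (hsp ⟨0, hrpos⟩).2.isConnected.nonempty
  have hn1 : 1 ≤ n := Fintype.card_pos
  have hnr : r ≤ n := Nat.le_of_dvd (by omega) hdvd
  obtain ⟨m, hm⟩ := hdvd
  have hm1 : 1 ≤ m := by
    rcases Nat.eq_zero_or_pos m with h | h
    · subst h; simp at hm; omega
    · exact h
  have hndr : n / r = m := by rw [hm, Nat.mul_div_cancel_left _ hrpos]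
  have hdeg : ∀ v, G.degree v = 2 * r := fun v => by
    rw [← degN_eq_degree]; exact hreg v
  have hdeg1 : ∀ (i : Fin r) (v : V), 1 ≤ (T i).degree v := fun i v =>
    one_le_degree_conn (hsp i).2.isConnected (by omega) v
  have hNdisj : ∀ (v : V) (i j : Fin r), i ≠ j →
      Disjoint ((T i).neighborFinset v) ((T j).neighborFinset v) := by
    intro v i j hij
    rw [Finset.disjoint_left]
    intro u hui huj
    rw [SimpleGraph.mem_neighborFinset] at hui huj
    exact Set.disjoint_left.1 (hdisj i j hij) ((T i).mem_edgeSet.2 hui)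
      ((T j).mem_edgeSet.2 huj)
  have hsumdeg : ∀ v : V, ∑ i, (T i).degree v ≤ 2 * r := by
    intro v
    rw [← hdeg v]
    have hb : (Finset.univ.biUnion fun i => (T i).neighborFinset v) ⊆ G.neighborFinset v := by
      intro u hu
      simp only [Finset.mem_biUnion, SimpleGraph.mem_neighborFinset] at hu ⊢
      obtain ⟨i, _, h⟩ := hu
      exact (hsp i).1 h
    calc ∑ i, (T i).degree v
        = (Finset.univ.biUnion fun i => (T i).neighborFinset v).card :=
          (Finset.card_biUnion fun i _ j _ h => hNdisj v i j h).symm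
      _ ≤ (G.neighborFinset v).card := Finset.card_le_card hb
      _ = G.degree v := rfl
  have hdegub : ∀ (i : Fin r) (v : V), (T i).degree v ≤ r + 1 := by
    intro i v
    have h1 : ∑ j ∈ Finset.univ.erase i, (T j).degree v + (T i).degree v
        = ∑ j, (T j).degree v := Finset.sum_erase_add _ _ (Finset.mem_univ i)
    have h2 : (Finset.univ.erase i).card • 1 ≤ ∑ j ∈ Finset.univ.erase i, (T j).degree v :=
      Finset.card_nsmul_le_sum _ _ 1 (fun j _ => hdeg1 j v)
    have h3 : (Finset.univ.erase i).card = r - 1 := by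
      rw [Finset.card_erase_of_mem (Finset.mem_univ i), Finset.card_univ, Fintype.card_fin]
    rw [h3, smul_eq_mul] at h2
    have h4 := hsumdeg v
    omega
  set innF : Fin r → Finset V := fun i => Finset.univ.filter (fun v => 2 ≤ (T i).degree v)
    with hinnF
  have hcard : ∀ i, (inn (T i)).ncard = (innF i).card := by
    intro i
    have h : inn (T i) = ↑(innF i) := by
      ext v; simp [inn, hinnF, degN_eq_degree]
    rw [h, Set.ncard_coe_finset]
  have htedge : ∀ i, ∑ v, (T i).degree v = 2 * (n - 1) := by
    intro i
    rw [SimpleGraph.sum_degrees_eq_twice_card_edges]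
    have := (hsp i).2.card_edgeFinset
    omega
  have hlb : ∀ i, 2 * (n - 1) ≤ n + (innF i).card * r := by
    intro i
    rw [← htedge i]
    simp only [hinnF]
    have hsplit := (Finset.sum_filter_add_sum_filter_not Finset.univ
      (fun v => 2 ≤ (T i).degree v) (fun v => (T i).degree v)).symm
    have hbig : ∑ v ∈ Finset.univ.filter (fun v => 2 ≤ (T i).degree v), (T i).degree v
        ≤ (Finset.univ.filter (fun v => 2 ≤ (T i).degree v)).card * (r + 1) := by
      rw [← smul_eq_mul]
      exact Finset.sum_le_card_nsmul _ _ _ (fun v _ => hdegub i v)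
    have hsmall : ∑ v ∈ Finset.univ.filter (fun v => ¬ 2 ≤ (T i).degree v), (T i).degree v
        ≤ (Finset.univ.filter (fun v => ¬ 2 ≤ (T i).degree v)).card * 1 := by
      rw [← smul_eq_mul]
      refine Finset.sum_le_card_nsmul _ _ _ (fun v hv => ?_)
      rw [Finset.mem_filter] at hv
      omega
    have hcc : (Finset.univ.filter (fun v => 2 ≤ (T i).degree v)).card
        + (Finset.univ.filter (fun v => ¬ 2 ≤ (T i).degree v)).card = n := by
      rw [Finset.card_filter_add_card_filter_not, Finset.card_univ]
    have hkr : (Finset.univ.filter (fun v => 2 ≤ (T i).degree v)).card * (r + 1)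
        = (Finset.univ.filter (fun v => 2 ≤ (T i).degree v)).card * r
          + (Finset.univ.filter (fun v => 2 ≤ (T i).degree v)).card := by ring
    omega
  have hklb : ∀ i, m ≤ (innF i).card := by
    intro i
    by_contra h
    push_neg at h
    have h1 := hlb i
    have h2 : ((innF i).card + 1) * r ≤ m * r := Nat.mul_le_mul_right r h
    have h3 : ((innF i).card + 1) * r = (innF i).card * r + r := by ring
    have h4 : m * r = r * m := by ring
    rw [hm] at h1
    have hA : 3 ≤ r * m := by nlinarith
    omega
  have hinnd : ∀ i j, i ≠ j → Disjoint (innF i) (innF j) := by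
    intro i j hij
    rw [Finset.disjoint_left]
    intro v hvi hvj
    rw [hinnF, Finset.mem_filter] at hvi hvj
    refine hij (hinner v i j ?_ ?_)
    · rw [degN_eq_degree]; omega
    · rw [degN_eq_degree]; omega
  have hsumle : ∑ i, (innF i).card ≤ n := by
    calc ∑ i, (innF i).card = (Finset.univ.biUnion innF).card :=
          (Finset.card_biUnion fun i _ j _ h => hinnd i j h).symm
      _ ≤ n := Finset.card_le_univ _
  have hub : ∀ i, (innF i).card ≤ m := by
    intro i
    have h1 : ∑ j ∈ Finset.univ.erase i, (innF j).card + (innF i).card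
        = ∑ j, (innF j).card := Finset.sum_erase_add _ _ (Finset.mem_univ i)
    have h2 : (Finset.univ.erase i).card • m ≤ ∑ j ∈ Finset.univ.erase i, (innF j).card :=
      Finset.card_nsmul_le_sum _ _ m (fun j _ => hklb j)
    have h3 : (Finset.univ.erase i).card = r - 1 := by
      rw [Finset.card_erase_of_mem (Finset.mem_univ i), Finset.card_univ, Fintype.card_fin]
    rw [h3, smul_eq_mul] at h2
    have h4 : (r - 1) * m + m = r * m := by
      have : r - 1 + 1 = r := by omega
      calc (r - 1) * m + m = (r - 1 + 1) * m := by ring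
        _ = r * m := by rw [this]
    omega
  intro i
  have hk : (inn (T i)).ncard = m := by
    rw [hcard i]; exact le_antisymm (hub i) (hklb i)
  refine ⟨by rw [hk, hndr], ?_⟩
  rw [ped, hk, hm]
  push_cast
  ring
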